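/- Let n ≥ 1, A ∈ ℂ^{n×n}, a ∈ ℂⁿ, and ν ∈ ℝ be such that ν·I − A Aᴴ is positive semidefinite. Then for every e ∈ ℂⁿ with |e_m| ≤ 1 for all m: ‖a − Aᴴ e‖₂² ≤ ‖a‖₂² + n·ν + 2·Σ_{m=1}^{n} |(A a)_m|, i.e., ‖a − Aᴴ e‖₂² ≤ ‖a‖₂² + n·ν + 2·‖A a‖₁. -/

import Mathlib

open Matrix
open scoped ComplexOrder

/-- bound `tp2_k`, eq. (35)/Appendix D of the paper: if `ν·I − AAᴴ ⪰ 0`,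
then for every `e` with `|e_m| ≤ 1` for all `m`,
`‖a − Aᴴe‖₂² ≤ ‖a‖₂² + n·ν + 2·‖Aa‖₁`. -/
theorem stmt14 (n : ℕ) (hn : 1 ≤ n)
    (A : Matrix (Fin n) (Fin n) ℂ) (a : Fin n → ℂ) (ν : ℝ)
    (hν : (ν • (1 : Matrix (Fin n) (Fin n) ℂ) - A * A.conjTranspose).PosSemidef) :
    ∀ e : Fin n → ℂ, (∀ m, ‖e m‖ ≤ 1) →
      (∑ m, ‖(a - A.conjTranspose.mulVec e) m‖ ^ 2) ≤
        (∑ m, ‖a m‖ ^ 2) + n * ν + 2 * ∑ m, ‖A.mulVec a m‖ := by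
  intro e he
  classical
  -- dot product of star v with v as a sum of normSq
  have hdot : ∀ v : Fin n → ℂ,
      dotProduct (star v) v = ((∑ m, Complex.normSq (v m) : ℝ) : ℂ) := by
    intro v
    simp [dotProduct, Complex.normSq_eq_conj_mul_self]
  -- quadratic form of A Aᴴ as sum of normSq of Aᴴ v
  have hAA : ∀ v : Fin n → ℂ,
      dotProduct (star v) ((A * A.conjTranspose) *ᵥ v)
        = ((∑ m, Complex.normSq (A.conjTranspose.mulVec v m) : ℝ) : ℂ) := by
    intro v
    have h1 : star v ᵥ* A = star (A.conjTranspose *ᵥ v) := by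
      rw [star_mulVec, conjTranspose_conjTranspose]
    rw [← mulVec_mulVec, dotProduct_mulVec, h1, hdot]
  -- key bound from positive semidefiniteness
  have hquad : ∀ v : Fin n → ℂ,
      (∑ m, Complex.normSq (A.conjTranspose.mulVec v m))
        ≤ ν * ∑ m, Complex.normSq (v m) := by
    intro v
    have h0 := (posSemidef_iff_dotProduct_mulVec.mp hν).2 v
    have hexp : dotProduct (star v)
        ((ν • (1 : Matrix (Fin n) (Fin n) ℂ) - A * A.conjTranspose) *ᵥ v)
        = ((ν * ∑ m, Complex.normSq (v m)
            - ∑ m, Complex.normSq (A.conjTranspose.mulVec v m) : ℝ) : ℂ) := by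
      rw [sub_mulVec, dotProduct_sub, hAA, smul_mulVec, one_mulVec,
        dotProduct_smul, hdot]
      rw [Complex.real_smul]
      push_cast
      ring
    rw [hexp] at h0
    have := Complex.zero_le_real.mp h0
    linarith
  -- ν ≥ 0
  have hν0 : 0 ≤ ν := by
    set i : Fin n := ⟨0, hn⟩
    have h1 := hquad (Pi.single i 1 : Fin n → ℂ)
    have h2 : (∑ m, Complex.normSq ((Pi.single i 1 : Fin n → ℂ) m)) = 1 := by
      rw [Finset.sum_eq_single i]
      · simp
      · intro b _ hb; simp [Pi.single_apply, hb]
      · simp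
    have h3 : (0:ℝ) ≤ ∑ m, Complex.normSq (A.conjTranspose.mulVec (Pi.single i 1 : Fin n → ℂ) m) :=
      Finset.sum_nonneg fun m _ => Complex.normSq_nonneg _
    rw [h2, mul_one] at h1
    linarith
  -- the reflected vector b and c := A a
  set b := A.conjTranspose.mulVec e with hb
  set c := A.mulVec a with hc
  -- cross term identity
  have hS : (∑ m, a m * (starRingEnd ℂ) (b m)) = ∑ k, (starRingEnd ℂ) (e k) * c k := by
    simp only [hb, hc, Matrix.mulVec, dotProduct, Matrix.conjTranspose_apply, map_sum,
      _root_.map_mul, RCLike.star_def, Complex.conj_conj, Finset.mul_sum]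
    rw [Finset.sum_comm]
    exact Finset.sum_congr rfl fun k _ => Finset.sum_congr rfl fun m _ => by ring
  -- cross term bound
  have hcross : -(∑ m, ‖c m‖) ≤ (∑ m, a m * (starRingEnd ℂ) (b m)).re := by
    rw [hS, Complex.re_sum]
    rw [← Finset.sum_neg_distrib]
    apply Finset.sum_le_sum
    intro k _
    have h1 : -(‖(starRingEnd ℂ) (e k) * c k‖)
        ≤ ((starRingEnd ℂ) (e k) * c k).re :=
      (abs_le.mp (Complex.abs_re_le_norm _)).1
    have h2 : ‖(starRingEnd ℂ) (e k) * c k‖ ≤ ‖c k‖ := by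
      rw [norm_mul, Complex.norm_conj]
      calc ‖e k‖ * ‖c k‖
          ≤ 1 * ‖c k‖ :=
            mul_le_mul_of_nonneg_right (he k) (norm_nonneg _)
        _ = ‖c k‖ := one_mul _
    linarith
  -- ‖e‖² ≤ n
  have hen : (∑ m, Complex.normSq (e m)) ≤ n := by
    calc (∑ m, Complex.normSq (e m)) ≤ ∑ _m : Fin n, (1:ℝ) := by
          apply Finset.sum_le_sum
          intro m _
          have := he m
          rw [← Complex.sq_norm]
          nlinarith [norm_nonneg (e m)]
      _ = n := by simp
  -- normSq b bound
  have hbb : (∑ m, Complex.normSq (b m)) ≤ n * ν := by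
    calc (∑ m, Complex.normSq (b m)) ≤ ν * ∑ m, Complex.normSq (e m) := hquad e
      _ ≤ ν * n := mul_le_mul_of_nonneg_left hen hν0
      _ = n * ν := mul_comm _ _
  -- expand the left-hand side
  have hexp : (∑ m, ‖(a - b) m‖ ^ 2)
      = (∑ m, Complex.normSq (a m)) + (∑ m, Complex.normSq (b m))
        - 2 * (∑ m, a m * (starRingEnd ℂ) (b m)).re := by
    rw [Complex.re_sum, Finset.mul_sum, ← Finset.sum_add_distrib, ← Finset.sum_sub_distrib]
    apply Finset.sum_congr rfl
    intro m _
    rw [Pi.sub_apply, Complex.sq_norm, Complex.normSq_sub]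
  have habs : (∑ m, ‖a m‖ ^ 2) = ∑ m, Complex.normSq (a m) := by
    exact Finset.sum_congr rfl fun m _ => Complex.sq_norm _
  rw [hexp, habs]
  linarith
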